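/- Let φ be a probability density on [0,1) satisfying φ(x) ~ c_φ(1-x)^β as x→1⁻ with c_φ > 0 and 0 < β < 1, and let σ² > 0. Define γ(t) = σ² ∫₀¹ x^t/(1-x²) φ(x) dx for integers t ≥ 0. Then ∑_{t=0}^∞ γ(t) = ∞, i.e. the covariances of the limit aggregated Gaussian process are not summable (long memory). -/

import Mathlib

open MeasureTheory Filter Topology

/-- Long memory of the limit aggregated Gaussian process: if the mixing density
satisfies `φ(x) ~ c_φ (1-x)^β` as `x → 1⁻` with `0 < β < 1`, then the covariances
`γ(t) = σ² ∫₀¹ x^t/(1-x²) φ(x) dx` are not summable. -/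
theorem aggregated_AR1_covariances_not_summable
    (φ : ℝ → ℝ) (cφ β σ2 : ℝ) (hc : 0 < cφ) (hβ0 : 0 < β) (hβ1 : β < 1) (hσ : 0 < σ2)
    (hmeas : Measurable φ)
    (hnonneg : ∀ x ∈ Set.Ico (0:ℝ) 1, 0 ≤ φ x)
    (hprob : ∫ x in Set.Ico (0:ℝ) 1, φ x = 1)
    (hasymp : Tendsto (fun x => φ x / (cφ * (1 - x) ^ β)) (𝓝[<] (1:ℝ)) (𝓝 1)) :
    ¬ Summable (fun t : ℕ => σ2 * ∫ x in Set.Ico (0:ℝ) 1, x ^ t / (1 - x ^ 2) * φ x) := by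
  intro hsum
  -- φ is integrable on [0,1)
  have hφint : IntegrableOn φ (Set.Ico (0:ℝ) 1) := by
    by_contra h
    rw [integral_undef h] at hprob
    norm_num at hprob
  -- from the asymptotics, get c ∈ (0,1) and two-sided bounds on [c,1)
  have hmem : {x : ℝ | φ x / (cφ * (1 - x) ^ β) ∈ Set.Ioo (1/2 : ℝ) 2} ∈ 𝓝[<] (1:ℝ) :=
    hasymp (Ioo_mem_nhds (by norm_num) (by norm_num))
  rw [mem_nhdsLT_iff_exists_Ioo_subset] at hmem
  obtain ⟨a, ha, hsub⟩ := hmem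
  have ha1 : a < 1 := ha
  set c : ℝ := max ((a+1)/2) (1/2) with hcdef
  have hc1 : c < 1 := by
    apply max_lt _ (by norm_num)
    linarith
  have hc0 : (0:ℝ) < c := lt_of_lt_of_le (by norm_num) (le_max_right _ _)
  have hac : a < c := lt_of_lt_of_le (by linarith) (le_max_left _ _)
  have hbound : ∀ x ∈ Set.Ico c 1,
      cφ/2 * (1-x)^β ≤ φ x ∧ φ x ≤ 2*cφ*(1-x)^β := by
    intro x hx
    have hx1 : x < 1 := hx.2
    have hxa : a < x := lt_of_lt_of_le hac hx.1
    have hpos : 0 < cφ * (1-x)^β := mul_pos hc (Real.rpow_pos_of_pos (by linarith) β)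
    obtain ⟨h1, h2⟩ := hsub ⟨hxa, hx1⟩
    constructor
    · have := (lt_div_iff₀ hpos).mp h1
      linarith
    · have := (div_lt_iff₀ hpos).mp h2
      linarith
  -- integrability of the envelope f0 = φ/(1-x²)
  have hf0meas : Measurable (fun x : ℝ => φ x / (1 - x ^ 2)) :=
    hmeas.div (measurable_const.sub (measurable_id.pow_const 2))
  have h01 : IntegrableOn (fun x : ℝ => φ x / (1 - x ^ 2)) (Set.Ico 0 c) := by
    have hmaj : IntegrableOn (fun x : ℝ => (1 - c^2)⁻¹ * φ x) (Set.Ico 0 c) :=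
      (hφint.mono_set (Set.Ico_subset_Ico le_rfl hc1.le)).const_mul _
    refine MeasureTheory.Integrable.mono hmaj hf0meas.aestronglyMeasurable ?_
    refine ae_restrict_of_forall_mem measurableSet_Ico ?_
    intro x hx
    have hx0 : (0:ℝ) ≤ x := hx.1
    have hxc : x < c := hx.2
    have hφx : 0 ≤ φ x := hnonneg x ⟨hx0, lt_trans hxc hc1⟩
    have hc2 : (0:ℝ) < 1 - c^2 := by nlinarith
    have hx2 : 1 - c^2 ≤ 1 - x^2 := by nlinarith
    have hxx : (0:ℝ) < 1 - x^2 := lt_of_lt_of_le hc2 hx2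
    rw [Real.norm_of_nonneg (div_nonneg hφx hxx.le),
      Real.norm_of_nonneg (mul_nonneg (inv_nonneg.2 hc2.le) hφx), inv_mul_eq_div]
    gcongr
  have h02 : IntegrableOn (fun x : ℝ => φ x / (1 - x ^ 2)) (Set.Ico c 1) := by
    have hii : IntervalIntegrable (fun x : ℝ => x ^ (β - 1)) volume 0 (1 - c) :=
      intervalIntegral.intervalIntegrable_rpow' (by linarith)
    have hii2 := hii.comp_sub_left 1
    simp only [sub_zero, sub_sub_cancel] at hii2
    have hii3 : IntervalIntegrable (fun x : ℝ => (1 - x) ^ (β - 1)) volume c 1 := hii2.symm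
    rw [intervalIntegrable_iff_integrableOn_Ico_of_le hc1.le] at hii3
    have hmaj : IntegrableOn (fun x : ℝ => 2*cφ * (1 - x) ^ (β - 1)) (Set.Ico c 1) :=
      hii3.const_mul _
    refine MeasureTheory.Integrable.mono hmaj hf0meas.aestronglyMeasurable ?_
    refine ae_restrict_of_forall_mem measurableSet_Ico ?_
    intro x hx
    have hx0 : (0:ℝ) ≤ x := hc0.le.trans hx.1
    have hx1 : x < 1 := hx.2
    have hu : (0:ℝ) < 1 - x := by linarith
    have hxx : (0:ℝ) < 1 - x^2 := by nlinarith
    have hφx : 0 ≤ φ x := hnonneg x ⟨hx0, hx1⟩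
    have hub := (hbound x hx).2
    have hden : 1 - x ≤ 1 - x^2 := by nlinarith
    have hbpos : (0:ℝ) ≤ (1-x)^(β-1) := Real.rpow_nonneg hu.le _
    rw [Real.norm_of_nonneg (div_nonneg hφx hxx.le),
      Real.norm_of_nonneg (by positivity)]
    have h1 : φ x / (1 - x^2) ≤ φ x / (1 - x) := by gcongr
    have h2 : φ x / (1 - x) ≤ 2*cφ*(1-x)^β / (1 - x) := by gcongr
    have h3 : 2*cφ*(1-x)^β / (1 - x) = 2*cφ * (1-x)^(β-1) := by
      rw [Real.rpow_sub_one hu.ne' β]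
      ring
    calc φ x / (1 - x^2) ≤ φ x / (1 - x) := h1
      _ ≤ 2*cφ*(1-x)^β / (1 - x) := h2
      _ = 2*cφ * (1-x)^(β-1) := h3
  have hf0int : IntegrableOn (fun x : ℝ => φ x / (1 - x ^ 2)) (Set.Ico 0 1) := by
    rw [← Set.Ico_union_Ico_eq_Ico hc0.le hc1.le]
    exact h01.union h02
  -- each covariance integrand is integrable
  have hmf : ∀ t : ℕ, Measurable (fun x : ℝ => x ^ t / (1 - x ^ 2) * φ x) := fun t =>
    ((measurable_id.pow_const t).div (measurable_const.sub (measurable_id.pow_const 2))).mul hmeas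
  have hftnn : ∀ t : ℕ, ∀ x ∈ Set.Ico (0:ℝ) 1, 0 ≤ x ^ t / (1 - x ^ 2) * φ x := by
    intro t x hx
    have hx0 : (0:ℝ) ≤ x := hx.1
    have hx1 : x < 1 := hx.2
    have hxx : (0:ℝ) < 1 - x^2 := by nlinarith
    exact mul_nonneg (div_nonneg (pow_nonneg hx0 t) hxx.le) (hnonneg x hx)
  have hftint : ∀ t : ℕ, IntegrableOn (fun x : ℝ => x ^ t / (1 - x ^ 2) * φ x)
      (Set.Ico 0 1) := by
    intro t
    refine MeasureTheory.Integrable.mono hf0int (hmf t).aestronglyMeasurable ?_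
    refine ae_restrict_of_forall_mem measurableSet_Ico ?_
    intro x hx
    have hx0 : (0:ℝ) ≤ x := hx.1
    have hx1 : x < 1 := hx.2
    have hxx : (0:ℝ) < 1 - x^2 := by nlinarith
    have hφx : 0 ≤ φ x := hnonneg x hx
    have hxt : x ^ t ≤ 1 := pow_le_one₀ hx0 hx1.le
    rw [Real.norm_of_nonneg (hftnn t x hx), Real.norm_of_nonneg (div_nonneg hφx hxx.le)]
    calc x ^ t / (1 - x^2) * φ x ≤ 1 / (1 - x^2) * φ x := by gcongr
      _ = φ x / (1 - x^2) := by ring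
  -- real-summability of the integrals
  set I : ℕ → ℝ := fun t => ∫ x in Set.Ico (0:ℝ) 1, x ^ t / (1 - x ^ 2) * φ x with hIdef
  have hInn : ∀ t, 0 ≤ I t := fun t =>
    setIntegral_nonneg measurableSet_Ico (hftnn t)
  have hsumI : Summable I := by
    have h := hsum.mul_left σ2⁻¹
    refine h.congr fun t => ?_
    simp [hIdef, ← mul_assoc, inv_mul_cancel₀ hσ.ne']
  -- the ENNReal sum of the covariances is finite
  have htop : ∑' t : ℕ, ENNReal.ofReal (I t) ≠ ⊤ := by
    rw [← ENNReal.ofReal_tsum_of_nonneg hInn hsumI]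
    exact ENNReal.ofReal_ne_top
  -- each lintegral equals ofReal of the integral
  have hA : ∀ t : ℕ, ∫⁻ x in Set.Ico (0:ℝ) 1, ENNReal.ofReal (x ^ t / (1 - x ^ 2) * φ x)
      = ENNReal.ofReal (I t) := by
    intro t
    exact (ofReal_integral_eq_lintegral_ofReal (hftint t)
      (ae_restrict_of_forall_mem measurableSet_Ico (hftnn t))).symm
  -- Tonelli
  have htonelli : ∫⁻ x in Set.Ico (0:ℝ) 1, ∑' t : ℕ, ENNReal.ofReal (x ^ t / (1 - x ^ 2) * φ x)
      = ∑' t : ℕ, ∫⁻ x in Set.Ico (0:ℝ) 1, ENNReal.ofReal (x ^ t / (1 - x ^ 2) * φ x) :=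
    lintegral_tsum fun t => ((hmf t).ennreal_ofReal).aemeasurable
  -- pointwise lower bound on [c,1)
  have hptwise : ∀ x ∈ Set.Ico c 1,
      ENNReal.ofReal (cφ/4 * (1-x) ^ (β - 2)) ≤
        ∑' t : ℕ, ENNReal.ofReal (x ^ t / (1 - x ^ 2) * φ x) := by
    intro x hx
    have hx0 : (0:ℝ) ≤ x := hc0.le.trans hx.1
    have hx1 : x < 1 := hx.2
    have hu : (0:ℝ) < 1 - x := by linarith
    have hxx : (0:ℝ) < 1 - x^2 := by nlinarith
    have hφx : 0 ≤ φ x := hnonneg x ⟨hx0, hx1⟩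
    have e1 : ∀ t : ℕ, ENNReal.ofReal (x ^ t / (1 - x ^ 2) * φ x)
        = (ENNReal.ofReal x) ^ t * ENNReal.ofReal (φ x / (1 - x ^ 2)) := by
      intro t
      rw [← ENNReal.ofReal_pow hx0, ← ENNReal.ofReal_mul (pow_nonneg hx0 t)]
      ring_nf
    rw [tsum_congr e1, ENNReal.tsum_mul_right, ENNReal.tsum_geometric]
    have e2 : (1 - ENNReal.ofReal x)⁻¹ = ENNReal.ofReal ((1 - x)⁻¹) := by
      rw [ENNReal.ofReal_inv_of_pos hu, ENNReal.ofReal_sub 1 hx0, ENNReal.ofReal_one]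
    rw [e2, ← ENNReal.ofReal_mul (inv_nonneg.2 hu.le)]
    apply ENNReal.ofReal_le_ofReal
    -- the real inequality
    have hlow := (hbound x ⟨hx.1, hx1⟩).1
    have h2x : 1 - x^2 ≤ 2*(1-x) := by nlinarith
    have hrp : (1-x) ^ (β - 2) = (1-x)^β / (1-x)^(2:ℕ) := by
      rw [← Real.rpow_natCast (1-x) 2, ← Real.rpow_sub hu]
      norm_num
    have hβpos : (0:ℝ) < (1-x)^β := Real.rpow_pos_of_pos hu β
    have key : cφ/2 * (1-x)^β / (2*(1-x)) ≤ φ x / (1 - x^2) :=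
      div_le_div₀ (by positivity) hlow hxx h2x
    have hfin : cφ/4 * ((1-x)^β / (1-x)^(2:ℕ)) = (1-x)⁻¹ * (cφ/2 * (1-x)^β / (2*(1-x))) := by
      field_simp
      ring
    rw [hrp, hfin]
    gcongr
  -- the divergent lower bound
  have hdiv : ∫⁻ x in Set.Ico c 1, ENNReal.ofReal (cφ/4 * (1-x) ^ (β - 2)) = ⊤ := by
    by_contra hne
    have hlt : ∫⁻ x in Set.Ico c 1, ENNReal.ofReal (cφ/4 * (1-x) ^ (β - 2)) < ⊤ :=
      lt_top_iff_ne_top.2 hne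
    have hcont : ContinuousOn (fun x : ℝ => cφ/4 * (1-x) ^ (β - 2)) (Set.Ico c 1) := by
      apply ContinuousOn.mul continuousOn_const
      apply ContinuousOn.rpow_const (continuousOn_const.sub continuousOn_id)
      intro x hx
      left
      have : x < 1 := hx.2
      intro h
      change (1:ℝ) - x = 0 at h
      nlinarith
    have hint : IntegrableOn (fun x : ℝ => cφ/4 * (1-x) ^ (β - 2)) (Set.Ico c 1) := by
      refine ⟨hcont.aestronglyMeasurable measurableSet_Ico, ?_⟩
      rw [hasFiniteIntegral_iff_ofReal]
      · exact hlt
      · refine ae_restrict_of_forall_mem measurableSet_Ico ?_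
        intro x hx
        have hu : (0:ℝ) < 1 - x := by linarith [hx.2]
        positivity
    have hint2 : IntegrableOn (fun x : ℝ => (1-x) ^ (β - 2)) (Set.Ico c 1) := by
      have h4 : IntegrableOn (fun x : ℝ => (4/cφ) * (cφ/4 * (1-x) ^ (β - 2)))
          (Set.Ico c 1) := hint.const_mul (4/cφ)
      refine h4.congr_fun (fun x _ => ?_) measurableSet_Ico
      field_simp
    rw [← intervalIntegrable_iff_integrableOn_Ico_of_le hc1.le] at hint2
    have hint3 := (hint2.symm.comp_sub_left 1)
    simp only [sub_sub_cancel] at hint3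
    have hint4 : IntervalIntegrable (fun x : ℝ => x ^ (β - 2)) volume 0 (1-c) := by
      rwa [show (1:ℝ) - 1 = 0 by ring] at hint3
    rw [intervalIntegrable_iff_integrableOn_Ioo_of_le (by linarith)] at hint4
    have := (intervalIntegral.integrableOn_Ioo_rpow_iff (by linarith : (0:ℝ) < 1 - c)).mp hint4
    linarith
  -- the contradiction
  have hchain : (⊤ : ENNReal) ≤ ∑' t : ℕ, ENNReal.ofReal (I t) := by
    calc (⊤ : ENNReal) = ∫⁻ x in Set.Ico c 1, ENNReal.ofReal (cφ/4 * (1-x) ^ (β - 2)) :=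
          hdiv.symm
      _ ≤ ∫⁻ x in Set.Ico c 1, ∑' t : ℕ, ENNReal.ofReal (x ^ t / (1 - x ^ 2) * φ x) :=
          setLIntegral_mono' measurableSet_Ico hptwise
      _ ≤ ∫⁻ x in Set.Ico (0:ℝ) 1, ∑' t : ℕ, ENNReal.ofReal (x ^ t / (1 - x ^ 2) * φ x) :=
          lintegral_mono_set (Set.Ico_subset_Ico hc0.le le_rfl)
      _ = ∑' t : ℕ, ∫⁻ x in Set.Ico (0:ℝ) 1, ENNReal.ofReal (x ^ t / (1 - x ^ 2) * φ x) :=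
          htonelli
      _ = ∑' t : ℕ, ENNReal.ofReal (I t) := tsum_congr hA
  exact htop (top_le_iff.mp hchain)
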